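/- arXiv:1207.0564 — 3 statements merged into one kernel-verified Lean document; each statement's English description precedes it below -/
import Mathlib

section
/- For every real polynomial F of one variable with deg F ≤ 2r − 1, the Gauss quadrature is exact: ∫_{−1}^{1} F(x) dx = Σ_{k=1}^{r} A_k · F(G_k). -/
open Polynomial MeasureTheory

/-- `Leg r` is the `r`-th (formal) derivative of `(X² − 1)^r`, a nonzero scalar
multiple of the degree-`r` Legendre polynomial. -/
noncomputable def Leg (r : ℕ) : Polynomial ℝ :=
  (fun p => Polynomial.derivative p)^[r] ((Polynomial.X ^ 2 - 1) ^ r)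

lemma leg_eq (r : ℕ) : Leg r = derivative^[r] ((X ^ 2 - 1) ^ r : ℝ[X]) := rfl

lemma pow_dvd_iter (r : ℕ) : ∀ i, ((X ^ 2 - 1 : ℝ[X]) ^ (r - i)) ∣
    derivative^[i] ((X ^ 2 - 1) ^ r : ℝ[X]) := by
  intro i
  induction i with
  | zero => simp
  | succ i ih =>
    rw [Function.iterate_succ_apply']
    obtain ⟨h, hh⟩ := ih
    rw [hh]
    rcases Nat.eq_zero_or_pos (r - i) with h0 | h0
    · have : r - (i + 1) = 0 := by omega
      simp [this]
    · obtain ⟨m, hm⟩ : ∃ m, r - i = m + 1 := ⟨r - i - 1, by omega⟩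
      have hm' : r - (i + 1) = m := by omega
      rw [hm, hm', derivative_mul, derivative_pow]
      refine dvd_add ⟨C ((m : ℝ) + 1) * derivative (X ^ 2 - 1) * h, ?_⟩
        ⟨(X ^ 2 - 1) * derivative h, ?_⟩
      · rw [Nat.add_sub_cancel]; push_cast; ring
      · ring

lemma iter_eval_boundary (r i : ℕ) (hi : i < r) (x : ℝ) (hx : x ^ 2 - 1 = 0) :
    (derivative^[i] ((X ^ 2 - 1) ^ r : ℝ[X])).eval x = 0 := by
  obtain ⟨h, hh⟩ := pow_dvd_iter r i
  rw [hh, eval_mul, eval_pow]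
  have : (X ^ 2 - 1 : ℝ[X]).eval x = 0 := by simpa using hx
  rw [this, zero_pow (by omega), zero_mul]

lemma poly_intInt (p : ℝ[X]) (a b : ℝ) :
    IntervalIntegrable (fun x => p.eval x) volume a b :=
  p.continuous.intervalIntegrable a b

lemma ortho_step (r j : ℕ) (hj : j + 1 ≤ r) (q : ℝ[X]) :
    (∫ x in (-1 : ℝ)..1, (derivative^[r - j] ((X ^ 2 - 1) ^ r : ℝ[X])).eval x * q.eval x)
      = - ∫ x in (-1 : ℝ)..1,
        (derivative^[r - (j + 1)] ((X ^ 2 - 1) ^ r : ℝ[X])).eval x * (derivative q).eval x := by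
  set u : ℝ[X] := derivative^[r - (j + 1)] ((X ^ 2 - 1) ^ r : ℝ[X]) with hu
  have hru : r - j = (r - (j + 1)) + 1 := by omega
  have hdu : derivative^[r - j] ((X ^ 2 - 1) ^ r : ℝ[X]) = derivative u := by
    rw [hru, Function.iterate_succ_apply']
  have hub : ∀ x : ℝ, x ^ 2 - 1 = 0 → u.eval x = 0 := fun x hx =>
    iter_eval_boundary r _ (by omega) x hx
  have key := intervalIntegral.integral_mul_deriv_eq_deriv_mul (a := (-1 : ℝ)) (b := 1)
    (u := fun x => q.eval x) (u' := fun x => (derivative q).eval x)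
    (v := fun x => u.eval x) (v' := fun x => (derivative u).eval x)
    (fun x _ => q.hasDerivAt x) (fun x _ => u.hasDerivAt x)
    (poly_intInt _ _ _) (poly_intInt _ _ _)
  rw [hdu]
  have h1 : u.eval 1 = 0 := hub 1 (by norm_num)
  have h2 : u.eval (-1) = 0 := hub (-1) (by norm_num)
  simp only [h1, h2, mul_zero, zero_sub, sub_zero, zero_mul] at key
  calc (∫ x in (-1:ℝ)..1, (derivative u).eval x * q.eval x)
      = ∫ x in (-1:ℝ)..1, q.eval x * (derivative u).eval x := by
        simp_rw [mul_comm]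
    _ = - ∫ x in (-1:ℝ)..1, (derivative q).eval x * u.eval x := by
        rw [key]
    _ = - ∫ x in (-1:ℝ)..1, u.eval x * (derivative q).eval x := by
        simp_rw [mul_comm]

lemma ortho (r : ℕ) (q : ℝ[X]) (hq : q.natDegree < r) :
    ∫ x in (-1 : ℝ)..1, (Leg r).eval x * q.eval x = 0 := by
  have main : ∀ j, j ≤ r → ∀ q : ℝ[X],
      (∫ x in (-1 : ℝ)..1, (derivative^[r] ((X ^ 2 - 1) ^ r : ℝ[X])).eval x * q.eval x)
        = (-1 : ℝ) ^ j * ∫ x in (-1 : ℝ)..1,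
          (derivative^[r - j] ((X ^ 2 - 1) ^ r : ℝ[X])).eval x * (derivative^[j] q).eval x := by
    intro j
    induction j with
    | zero => intro _ q; simp
    | succ j ih =>
      intro hj q
      rw [ih (by omega) q, ortho_step r j hj (derivative^[j] q),
        ← Function.iterate_succ_apply' derivative j q]
      ring
  have h := main r le_rfl q
  rw [Polynomial.iterate_derivative_eq_zero hq] at h
  simpa [leg_eq] using h

lemma base_monic (r : ℕ) : ((X ^ 2 - 1 : ℝ[X]) ^ r).Monic := by
  have : (X ^ 2 - 1 : ℝ[X]) = X ^ 2 - C 1 := by simp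
  exact (this ▸ monic_X_pow_sub_C (1 : ℝ) two_ne_zero).pow r

lemma base_natDegree (r : ℕ) : ((X ^ 2 - 1 : ℝ[X]) ^ r).natDegree = 2 * r := by
  have h : (X ^ 2 - 1 : ℝ[X]) = X ^ 2 - C 1 := by simp
  have h2 : (X ^ 2 - 1 : ℝ[X]).natDegree = 2 := by rw [h]; exact natDegree_X_pow_sub_C
  have hm : (X ^ 2 - 1 : ℝ[X]).Monic := h ▸ monic_X_pow_sub_C (1 : ℝ) two_ne_zero
  rw [hm.natDegree_pow, h2, Nat.mul_comm]

lemma leg_coeff (r : ℕ) : (Leg r).coeff r = ((2 * r).descFactorial r : ℝ) := by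
  rw [leg_eq, Polynomial.coeff_iterate_derivative]
  have : ((X ^ 2 - 1 : ℝ[X]) ^ r).coeff (r + r) = 1 := by
    have := (base_monic r).leadingCoeff
    rwa [leadingCoeff, base_natDegree, two_mul] at this
  rw [this, nsmul_eq_mul, mul_one, two_mul]

lemma leg_ne_zero (r : ℕ) : Leg r ≠ 0 := by
  intro h
  have := leg_coeff r
  rw [h, coeff_zero] at this
  have : ((2 * r).descFactorial r : ℝ) = 0 := this.symm
  rw [Nat.cast_eq_zero, Nat.descFactorial_eq_zero_iff_lt] at this
  omega

lemma leg_natDegree_le (r : ℕ) : (Leg r).natDegree ≤ r := by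
  rw [leg_eq]
  have := Polynomial.natDegree_iterate_derivative ((X ^ 2 - 1 : ℝ[X]) ^ r) r
  rwa [base_natDegree, two_mul, Nat.add_sub_cancel] at this

/-- `G 1 < … < G r` are the Gauss points: the roots of `Leg r`, all in `(-1,1)`. -/
def IsGaussPoints (r : ℕ) (G : ℕ → ℝ) : Prop :=
  (∀ k, 1 ≤ k → k < r → G k < G (k + 1)) ∧
  ∀ k, 1 ≤ k → k ≤ r → G k ∈ Set.Ioo (-1 : ℝ) 1 ∧ (Leg r).IsRoot (G k)

/-- `A k = ∫_{-1}^{1} ℓ_k` where `ℓ_k` is the Lagrange basis polynomial of degree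
`≤ r - 1` at the Gauss points, i.e. `ℓ_k (G j) = δ_{jk}`. -/
def IsGaussWeights (r : ℕ) (G A : ℕ → ℝ) : Prop :=
  ∀ k, 1 ≤ k → k ≤ r → ∃ ℓ : Polynomial ℝ,
    ℓ.natDegree ≤ r - 1 ∧
    (∀ j, 1 ≤ j → j ≤ r → ℓ.eval (G j) = if j = k then 1 else 0) ∧
    A k = ∫ x in (-1 : ℝ)..1, ℓ.eval x

/-- Gauss quadrature with `r` nodes is exact on polynomials of degree `≤ 2r − 1`:
`∫_{−1}^{1} F = Σ_{k=1}^{r} A_k F(G_k)`. -/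
theorem gauss_quadrature_exact (r : ℕ) (hr : 1 ≤ r) (G A : ℕ → ℝ)
    (hG : IsGaussPoints r G) (hA : IsGaussWeights r G A)
    (F : Polynomial ℝ) (hF : F.natDegree ≤ 2 * r - 1) :
    ∫ x in (-1 : ℝ)..1, F.eval x = ∑ k ∈ Finset.Icc 1 r, A k * F.eval (G k) := by
  obtain ⟨hmono, hroot⟩ := hG
  -- strict monotonicity of the Gauss points
  have hlt' : ∀ d i, 1 ≤ i → i + d + 1 ≤ r → G i < G (i + d + 1) := by
    intro d
    induction d with
    | zero => intro i hi h; exact hmono i hi (by omega)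
    | succ d ih =>
      intro i hi h
      refine (ih i hi (by omega)).trans ?_
      have h2 := hmono (i + d + 1) (by omega) (by omega)
      have e : i + (d + 1) + 1 = i + d + 1 + 1 := by omega
      rw [e]
      exact h2
  have hlt : ∀ i j, 1 ≤ i → i < j → j ≤ r → G i < G j := by
    intro i j hi hij hjr
    have := hlt' (j - i - 1) i hi (by omega)
    have e : i + (j - i - 1) + 1 = j := by omega
    rwa [e] at this
  have hne : ∀ i j, 1 ≤ i → i ≤ r → 1 ≤ j → j ≤ r → i ≠ j → G i ≠ G j := by
    intro i j hi hir hj hjr hij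
    rcases Nat.lt_or_ge i j with h | h
    · exact ne_of_lt (hlt i j hi h hjr)
    · exact (ne_of_lt (hlt j i hj (by omega) hir)).symm
  -- the nodal polynomial
  set W : Polynomial ℝ := ∏ k ∈ Finset.Icc 1 r, (X - C (G k)) with hW
  have hWmonic : W.Monic := monic_prod_of_monic _ _ fun k _ => monic_X_sub_C (G k)
  have hWdeg : W.natDegree = r := by
    rw [hW, natDegree_prod _ _ fun k _ => X_sub_C_ne_zero (G k)]
    simp [natDegree_X_sub_C]
  have hWeval : ∀ k, 1 ≤ k → k ≤ r → W.eval (G k) = 0 := by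
    intro k h1 h2
    rw [hW, eval_prod]
    exact Finset.prod_eq_zero (Finset.mem_Icc.mpr ⟨h1, h2⟩) (by simp)
  -- W divides Leg r
  have hdvd : W ∣ Leg r := by
    have hnodup : ((Finset.Icc 1 r).val.map G).Nodup := by
      refine Multiset.Nodup.map_on ?_ (Finset.Icc 1 r).nodup
      intro i hi j hj hGij
      rw [Finset.mem_val, Finset.mem_Icc] at hi hj
      by_contra hij
      exact hne i j hi.1 hi.2 hj.1 hj.2 hij hGij
    have hle : ((Finset.Icc 1 r).val.map G) ≤ (Leg r).roots := by
      rw [Multiset.le_iff_count]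
      intro a
      rw [Polynomial.count_roots]
      by_cases ha : a ∈ (Finset.Icc 1 r).val.map G
      · obtain ⟨k, hk, rfl⟩ := Multiset.mem_map.mp ha
        rw [Finset.mem_val, Finset.mem_Icc] at hk
        have hroot' : (Leg r).IsRoot (G k) := (hroot k hk.1 hk.2).2
        have h1 : 1 ≤ (Leg r).rootMultiplicity (G k) :=
          (Polynomial.rootMultiplicity_pos (leg_ne_zero r)).mpr hroot'
        have h2 : Multiset.count (G k) ((Finset.Icc 1 r).val.map G) ≤ 1 :=
          (Multiset.nodup_iff_count_le_one.mp hnodup) (G k)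
        omega
      · rw [Multiset.count_eq_zero_of_notMem ha]; omega
    have h := (Multiset.prod_X_sub_C_dvd_iff_le_roots (leg_ne_zero r) _).mpr hle
    rw [Multiset.map_map] at h
    rw [hW, Finset.prod_eq_multiset_prod]
    exact h
  obtain ⟨e, he⟩ := hdvd
  have he0 : e ≠ 0 := by
    intro h; rw [h, mul_zero] at he; exact leg_ne_zero r he
  have hedeg : e.natDegree = 0 := by
    have h1 : (Leg r).natDegree = W.natDegree + e.natDegree := by
      rw [he]; exact natDegree_mul hWmonic.ne_zero he0
    have := leg_natDegree_le r
    omega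
  set c : ℝ := e.coeff 0 with hc
  have hec : e = C c := Polynomial.eq_C_of_natDegree_eq_zero hedeg
  have hcne : c ≠ 0 := by
    intro h; rw [h, map_zero] at hec; exact he0 hec
  -- orthogonality of W to low-degree polynomials
  have hWint : ∀ q : Polynomial ℝ, q.natDegree < r →
      ∫ x in (-1 : ℝ)..1, W.eval x * q.eval x = 0 := by
    intro q hq
    have hxy : ∀ x : ℝ, W.eval x * q.eval x = c⁻¹ * ((Leg r).eval x * q.eval x) := by
      intro x
      rw [he, hec, eval_mul, eval_C]
      field_simp
    simp_rw [hxy]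
    rw [intervalIntegral.integral_const_mul, ortho r q hq, mul_zero]
  -- divide F by W
  set s : Polynomial ℝ := F %ₘ W with hs
  set d : Polynomial ℝ := F /ₘ W with hd
  have hFs : F = W * d + s := by
    rw [hs, hd, add_comm]; exact (Polynomial.modByMonic_add_div F W).symm
  have hW1 : W ≠ 1 := by
    intro h; rw [h, natDegree_one] at hWdeg; omega
  have hsdeg : s.natDegree < r := by
    have h := Polynomial.natDegree_modByMonic_lt F hWmonic hW1
    rw [← hs, hWdeg] at h
    exact h
  have hddeg : d.natDegree < r := by
    have h := Polynomial.natDegree_divByMonic F hWmonic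
    rw [← hd, hWdeg] at h
    omega
  -- Lagrange interpolation
  choose! ℓ hldeg hleval hlint using hA
  set L : Polynomial ℝ := ∑ k ∈ Finset.Icc 1 r, C (s.eval (G k)) * ℓ k with hL
  have hLeval : ∀ j, 1 ≤ j → j ≤ r → L.eval (G j) = s.eval (G j) := by
    intro j h1 h2
    rw [hL, eval_finset_sum]
    rw [Finset.sum_eq_single j]
    · rw [eval_mul, eval_C, hleval j h1 h2 j h1 h2, if_pos rfl, mul_one]
    · intro k hk hkj
      rw [Finset.mem_Icc] at hk
      rw [eval_mul, eval_C, hleval k hk.1 hk.2 j h1 h2, if_neg (fun h => hkj h.symm), mul_zero]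
    · intro h
      exact absurd (Finset.mem_Icc.mpr ⟨h1, h2⟩) h
  have hLdeg : L.natDegree < r := by
    refine lt_of_le_of_lt (Polynomial.natDegree_sum_le_of_forall_le _ _ ?_) (show r - 1 < r by omega)
    intro k hk
    rw [Finset.mem_Icc] at hk
    exact (Polynomial.natDegree_C_mul_le _ _).trans (hldeg k hk.1 hk.2)
  have hsL : s = L := by
    have hz : s - L = 0 := by
      refine Polynomial.eq_zero_of_natDegree_lt_card_of_eval_eq_zero _
        (f := fun i : Fin r => G (i + 1)) ?_ ?_ ?_
      · intro i j hij
        have hi := i.isLt; have hj := j.isLt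
        have : (i : ℕ) + 1 = (j : ℕ) + 1 := by
          by_contra hne'
          exact hne (i + 1) (j + 1) (by omega) (by omega) (by omega) (by omega) hne' hij
        exact Fin.ext (by omega)
      · intro i
        have hi := i.isLt
        rw [eval_sub, hLeval ((i : ℕ) + 1) (by omega) (by omega), sub_self]
      · rw [Fintype.card_fin]
        exact lt_of_le_of_lt (Polynomial.natDegree_sub_le _ _) (max_lt hsdeg hLdeg)
    exact sub_eq_zero.mp hz
  -- putting it together
  have hFeval : ∀ k, 1 ≤ k → k ≤ r → F.eval (G k) = s.eval (G k) := by
    intro k h1 h2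
    rw [hFs, eval_add, eval_mul, hWeval k h1 h2, zero_mul, zero_add]
  have hint1 : ∫ x in (-1 : ℝ)..1, F.eval x
      = (∫ x in (-1 : ℝ)..1, W.eval x * d.eval x) + ∫ x in (-1 : ℝ)..1, s.eval x := by
    rw [← intervalIntegral.integral_add
      (show IntervalIntegrable (fun x => W.eval x * d.eval x) volume (-1) 1 from
        (W.continuous.mul d.continuous).intervalIntegrable _ _)
      (s.continuous.intervalIntegrable _ _)]
    refine intervalIntegral.integral_congr fun x _ => ?_
    rw [hFs, eval_add, eval_mul]
  obtain ⟨b, hb⟩ : ∃ b : ℕ → ℝ, ∀ k, b k = s.eval (G k) := ⟨_, fun _ => rfl⟩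
  have hintL : ∫ x in (-1 : ℝ)..1, s.eval x = ∑ k ∈ Finset.Icc 1 r, b k * A k := by
    have hfun : ∀ x : ℝ, s.eval x = ∑ k ∈ Finset.Icc 1 r, b k * (ℓ k).eval x := by
      intro x
      conv_lhs => rw [hsL]
      rw [hL, eval_finset_sum]
      exact Finset.sum_congr rfl fun k _ => by rw [eval_mul, eval_C, hb]
    simp_rw [hfun]
    rw [intervalIntegral.integral_finset_sum (fun k _ =>
      show IntervalIntegrable (fun x => b k * (ℓ k).eval x) volume (-1) 1 from
        (continuous_const.mul (ℓ k).continuous).intervalIntegrable _ _)]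
    refine Finset.sum_congr rfl fun k hk => ?_
    rw [Finset.mem_Icc] at hk
    rw [intervalIntegral.integral_const_mul, ← hlint k hk.1 hk.2]
  rw [hint1, hWint d hddeg, zero_add, hintL]
  refine Finset.sum_congr rfl fun k hk => ?_
  rw [Finset.mem_Icc] at hk
  rw [hb, hFeval k hk.1 hk.2, mul_comm]
end

section
/- For every real polynomial q with deg q ≤ r − 1 and every integer 1 ≤ l ≤ r, the partial weighted sum satisfies ( Σ_{k=1}^{l} A_k · q(G_k) )^2 ≤ 2 · ∫_{−1}^{1} q(y)^2 dy. -/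
open Polynomial MeasureTheory

lemma polyIntegrable (p : Polynomial ℝ) (a b : ℝ) :
    IntervalIntegrable (fun x => p.eval x) volume a b :=
  p.continuous.intervalIntegrable a b

lemma ftc_poly (p : Polynomial ℝ) (a b : ℝ) :
    ∫ x in a..b, (derivative p).eval x = p.eval b - p.eval a :=
  intervalIntegral.integral_eq_sub_of_hasDerivAt (fun x _ => p.hasDerivAt x)
    (polyIntegrable _ a b)

lemma sqsub_ne (r : ℕ) : ((X ^ 2 - 1 : Polynomial ℝ) ^ r) ≠ 0 := by
  apply pow_ne_zero
  intro h
  have := congrArg (Polynomial.eval (0:ℝ)) h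
  simp at this

lemma mult_ge (r : ℕ) (t : ℝ) (ht : t = 1 ∨ t = -1) :
    r ≤ ((X ^ 2 - 1 : Polynomial ℝ) ^ r).rootMultiplicity t := by
  rw [Polynomial.le_rootMultiplicity_iff (sqsub_ne r)]
  rcases ht with rfl | rfl
  · exact ⟨(X + C 1) ^ r, by rw [← mul_pow]; simp only [Polynomial.C_1]; ring⟩
  · exact ⟨(X - C 1) ^ r, by rw [← mul_pow]; simp only [Polynomial.C_1, Polynomial.C_neg]; ring⟩

lemma leg_aux_root (r j : ℕ) (hj : j < r) (t : ℝ) (ht : t = 1 ∨ t = -1) :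
    (derivative^[j] ((X ^ 2 - 1 : Polynomial ℝ) ^ r)).eval t = 0 :=
  Polynomial.isRoot_iterate_derivative_of_lt_rootMultiplicity
    (lt_of_lt_of_le hj (mult_ge r t ht))

lemma orth_aux (r : ℕ) : ∀ j, j ≤ r → ∀ s : Polynomial ℝ, s.degree < (j : ℕ) →
    ∫ x in (-1:ℝ)..1, ((derivative^[j] ((X ^ 2 - 1 : Polynomial ℝ) ^ r)) * s).eval x = 0 := by
  intro j
  induction j with
  | zero =>
    intro _ s hs
    have hs0 : s = 0 := by
      by_contra h
      rw [degree_eq_natDegree h] at hs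
      exact absurd hs (by exact_mod_cast Nat.not_lt_zero _)
    simp [hs0]
  | succ j ih =>
    intro hj1 s hs
    have hjr : j < r := hj1
    set Q := derivative^[j] ((X ^ 2 - 1 : Polynomial ℝ) ^ r) with hQ
    have hstep : ∀ x : ℝ, ((derivative^[j+1] ((X ^ 2 - 1 : Polynomial ℝ) ^ r)) * s).eval x
        = (derivative (Q * s)).eval x - (Q * derivative s).eval x := by
      intro x
      rw [Function.iterate_succ_apply', derivative_mul]
      simp only [eval_mul, eval_add, eval_sub]
      ring
    rw [intervalIntegral.integral_congr (fun x _ => hstep x),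
      intervalIntegral.integral_sub (polyIntegrable _ _ _) (polyIntegrable _ _ _),
      ftc_poly]
    have hds : (derivative s).degree < (j : ℕ) := by
      rcases eq_or_ne (derivative s) 0 with h0 | h0
      · rw [h0, degree_zero]
        exact WithBot.bot_lt_coe j
      · have hsne : s ≠ 0 := by
          intro h; rw [h] at h0; simp at h0
        have h1 : s.natDegree < j + 1 := by
          rwa [natDegree_lt_iff_degree_lt hsne]
        have h2 : s.natDegree ≠ 0 := by
          intro h
          exact h0 (derivative_of_natDegree_zero h)
        have h3 := natDegree_derivative_lt h2
        rw [degree_eq_natDegree h0]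
        exact_mod_cast by omega
    rw [ih (le_of_lt hj1) (derivative s) hds]
    simp [eval_mul, leg_aux_root r j hjr 1 (Or.inl rfl), leg_aux_root r j hjr (-1) (Or.inr rfl), ← hQ]
    have h1 := leg_aux_root r j hjr 1 (Or.inl rfl)
    have h2 := leg_aux_root r j hjr (-1) (Or.inr rfl)
    rw [← hQ] at h1 h2
    rw [h1, h2]; ring

lemma leg_orth (r : ℕ) (s : Polynomial ℝ) (hs : s.natDegree < r) :
    ∫ x in (-1:ℝ)..1, ((Leg r) * s).eval x = 0 := by
  have : Leg r = derivative^[r] ((X ^ 2 - 1 : Polynomial ℝ) ^ r) := rfl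
  rw [this]
  apply orth_aux r r le_rfl
  rcases eq_or_ne s 0 with rfl | h
  · rw [degree_zero]; exact WithBot.bot_lt_coe r
  · rw [degree_eq_natDegree h]; exact_mod_cast hs

lemma natDegree_leg (r : ℕ) (hr : 1 ≤ r) : (Leg r).natDegree = r ∧ Leg r ≠ 0 := by
  have base : ((X ^ 2 - 1 : Polynomial ℝ) ^ r).natDegree = 2 * r := by
    rw [natDegree_pow]
    have : (X ^ 2 - 1 : Polynomial ℝ) = X ^ 2 - C 1 := by rw [map_one]
    rw [this, natDegree_X_pow_sub_C]
    ring
  have key : ∀ j, j ≤ r → (derivative^[j] ((X ^ 2 - 1 : Polynomial ℝ) ^ r)).natDegree = 2 * r - j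
      ∧ (derivative^[j] ((X ^ 2 - 1 : Polynomial ℝ) ^ r)) ≠ 0 := by
    intro j
    induction j with
    | zero => intro _; exact ⟨base, sqsub_ne r⟩
    | succ j ih =>
      intro hj
      obtain ⟨hd, hne⟩ := ih (by omega)
      have hpos : 0 < (derivative^[j] ((X ^ 2 - 1 : Polynomial ℝ) ^ r)).natDegree := by omega
      have hdeg := degree_derivative_eq _ hpos
      rw [Function.iterate_succ_apply']
      constructor
      · rw [natDegree_eq_of_degree_eq_some hdeg, hd]; omega
      · intro h
        rw [h, degree_zero] at hdeg
        exact absurd hdeg.symm (by simp)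
  have hL : Leg r = derivative^[r] ((X ^ 2 - 1 : Polynomial ℝ) ^ r) := rfl
  rw [hL]
  refine ⟨?_, (key r le_rfl).2⟩
  rw [(key r le_rfl).1]; omega

lemma G_strictMono (r : ℕ) (G : ℕ → ℝ) (hG : IsGaussPoints r G) :
    ∀ a b, 1 ≤ a → a < b → b ≤ r → G a < G b := by
  intro a b ha hab hbr
  induction b with
  | zero => omega
  | succ b ih =>
    rcases eq_or_lt_of_le (Nat.lt_succ_iff.mp hab) with h | h
    · subst h; exact hG.1 a ha (by omega)
    · exact (ih h (by omega)).trans (hG.1 b (by omega) (by omega))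

lemma G_injOn (r : ℕ) (G : ℕ → ℝ) (hG : IsGaussPoints r G) :
    Set.InjOn G (Finset.Icc 1 r) := by
  intro a ha b hb hab
  simp only [Finset.coe_Icc, Set.mem_Icc] at ha hb
  rcases lt_trichotomy a b with h | h | h
  · exact absurd hab (ne_of_lt (G_strictMono r G hG a b ha.1 h hb.2))
  · exact h
  · exact absurd hab.symm (ne_of_lt (G_strictMono r G hG b a hb.1 h ha.2))

lemma exact_low (r : ℕ) (hr : 1 ≤ r) (G A : ℕ → ℝ) (hG : IsGaussPoints r G)
    (hA : IsGaussWeights r G A) (p : Polynomial ℝ) (hp : p.natDegree ≤ r - 1) :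
    ∑ k ∈ Finset.Icc 1 r, A k * p.eval (G k) = ∫ x in (-1:ℝ)..1, p.eval x := by
  choose! ℓ hdeg hval hint using hA
  set L : Polynomial ℝ := ∑ k ∈ Finset.Icc 1 r, C (p.eval (G k)) * ℓ k with hL
  have hLdeg : L.natDegree ≤ r - 1 := by
    refine (natDegree_sum_le _ _).trans ?_
    rw [Finset.fold_max_le]
    refine ⟨by omega, fun k hk => ?_⟩
    simp only [Finset.mem_Icc] at hk
    exact (natDegree_C_mul_le _ _).trans (hdeg k hk.1 hk.2)
  have hPL : p = L := by
    have h0 : p - L = 0 := by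
      apply eq_zero_of_natDegree_lt_card_of_eval_eq_zero' _ ((Finset.Icc 1 r).image G)
      · intro x hx
        obtain ⟨j, hj, rfl⟩ := Finset.mem_image.mp hx
        obtain ⟨hj1, hjr⟩ := Finset.mem_Icc.mp hj
        rw [eval_sub, hL, eval_finset_sum]
        simp only [eval_mul, eval_C]
        have : ∀ k ∈ Finset.Icc 1 r,
            p.eval (G k) * (ℓ k).eval (G j) = if j = k then p.eval (G k) else 0 := by
          intro k hk
          obtain ⟨hk1, hkr⟩ := Finset.mem_Icc.mp hk
          rw [hval k hk1 hkr j hj1 hjr]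
          split <;> simp
        rw [Finset.sum_congr rfl this, Finset.sum_ite_eq]
        simp [hj]
      · rw [Finset.card_image_of_injOn (G_injOn r G hG), Nat.card_Icc]
        have : (p - L).natDegree ≤ r - 1 :=
          (natDegree_sub_le _ _).trans (max_le hp hLdeg)
        omega
    exact sub_eq_zero.mp h0
  calc ∑ k ∈ Finset.Icc 1 r, A k * p.eval (G k)
      = ∑ k ∈ Finset.Icc 1 r, ∫ x in (-1:ℝ)..1, p.eval (G k) * (ℓ k).eval x := by
        apply Finset.sum_congr rfl
        intro k hk
        obtain ⟨hk1, hkr⟩ := Finset.mem_Icc.mp hk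
        rw [intervalIntegral.integral_const_mul, ← hint k hk1 hkr]; ring
    _ = ∫ x in (-1:ℝ)..1, ∑ k ∈ Finset.Icc 1 r, p.eval (G k) * (ℓ k).eval x := by
        rw [intervalIntegral.integral_finset_sum]
        intro k hk
        exact (continuous_const.mul (ℓ k).continuous).intervalIntegrable _ _
    _ = ∫ x in (-1:ℝ)..1, p.eval x := by
        apply intervalIntegral.integral_congr
        intro x _
        conv_rhs => rw [hPL]
        simp only [hL, eval_finset_sum, eval_mul, eval_C]

lemma exact_high (r : ℕ) (hr : 1 ≤ r) (G A : ℕ → ℝ) (hG : IsGaussPoints r G)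
    (hA : IsGaussWeights r G A) (p : Polynomial ℝ) (hp : p.natDegree ≤ 2 * r - 2) :
    ∑ k ∈ Finset.Icc 1 r, A k * p.eval (G k) = ∫ x in (-1:ℝ)..1, p.eval x := by
  obtain ⟨hld, hlne⟩ := natDegree_leg r hr
  have hc : (Leg r).leadingCoeff ≠ 0 := leadingCoeff_ne_zero.mpr hlne
  set M : Polynomial ℝ := Leg r * C (Leg r).leadingCoeff⁻¹ with hM
  have hMmonic : M.Monic := monic_mul_leadingCoeff_inv hlne
  have hMdeg : M.natDegree = r := by
    rw [hM, natDegree_mul hlne (by simpa using inv_ne_zero hc), natDegree_C, hld]; ring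
  set t := p %ₘ M with ht
  set s := p /ₘ M with hs
  have hsplit : p = M * s + t := by
    conv_lhs => rw [← modByMonic_add_div p M]
    ring
  have htdeg : t.natDegree ≤ r - 1 := by
    have hM1 : M ≠ 1 := by
      intro h
      rw [h, natDegree_one] at hMdeg
      omega
    have h := natDegree_modByMonic_lt p hMmonic hM1
    rw [← ht, hMdeg] at h
    omega
  have hsdeg : s.natDegree < r := by
    rw [hs, natDegree_divByMonic p hMmonic, hMdeg]
    omega
  have hzero : ∀ k, 1 ≤ k → k ≤ r → M.eval (G k) = 0 := by
    intro k hk1 hkr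
    rw [hM, eval_mul, (hG.2 k hk1 hkr).2, zero_mul]
  have hMs : ∫ x in (-1:ℝ)..1, (M * s).eval x = 0 := by
    have : M * s = Leg r * (C (Leg r).leadingCoeff⁻¹ * s) := by rw [hM]; ring
    rw [this]
    apply leg_orth
    exact lt_of_le_of_lt (natDegree_C_mul_le _ _) (by omega)
  calc ∑ k ∈ Finset.Icc 1 r, A k * p.eval (G k)
      = ∑ k ∈ Finset.Icc 1 r, A k * t.eval (G k) := by
        apply Finset.sum_congr rfl
        intro k hk
        obtain ⟨hk1, hkr⟩ := Finset.mem_Icc.mp hk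
        rw [hsplit]
        simp [eval_add, eval_mul, hzero k hk1 hkr]
    _ = ∫ x in (-1:ℝ)..1, t.eval x := exact_low r hr G A hG hA t htdeg
    _ = (∫ x in (-1:ℝ)..1, (M * s).eval x) + ∫ x in (-1:ℝ)..1, t.eval x := by
        rw [hMs, zero_add]
    _ = ∫ x in (-1:ℝ)..1, p.eval x := by
        rw [← intervalIntegral.integral_add (polyIntegrable _ _ _) (polyIntegrable _ _ _)]
        apply intervalIntegral.integral_congr
        intro x _
        simp only [hsplit, eval_add]

lemma A_nonneg (r : ℕ) (hr : 1 ≤ r) (G A : ℕ → ℝ) (hG : IsGaussPoints r G)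
    (hA : IsGaussWeights r G A) (k : ℕ) (hk1 : 1 ≤ k) (hkr : k ≤ r) : 0 ≤ A k := by
  obtain ⟨ℓ, hdeg, hval, hint⟩ := hA k hk1 hkr
  have h2 : ∑ j ∈ Finset.Icc 1 r, A j * (ℓ ^ 2).eval (G j) = ∫ x in (-1:ℝ)..1, (ℓ ^ 2).eval x := by
    apply exact_high r hr G A hG hA
    rw [natDegree_pow]
    omega
  have hls : ∑ j ∈ Finset.Icc 1 r, A j * (ℓ ^ 2).eval (G j) = A k := by
    rw [Finset.sum_eq_single k]
    · rw [eval_pow, hval k hk1 hkr]; simp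
    · intro j hj hjk
      obtain ⟨hj1, hjr⟩ := Finset.mem_Icc.mp hj
      rw [eval_pow, hval j hj1 hjr, if_neg hjk]
      ring
    · intro h
      exact absurd (Finset.mem_Icc.mpr ⟨hk1, hkr⟩) h
  rw [hls] at h2
  rw [h2]
  apply intervalIntegral.integral_nonneg (by norm_num)
  intro x _
  rw [eval_pow]
  positivity

/-- For every polynomial `q` of degree `≤ r − 1` and every `1 ≤ l ≤ r`, the
partial weighted sum satisfies `(Σ_{k=1}^{l} A_k q(G_k))² ≤ 2 ∫_{−1}^{1} q²`. -/
theorem gauss_partial_sum_bound (r : ℕ) (hr : 1 ≤ r) (G A : ℕ → ℝ)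
    (hG : IsGaussPoints r G) (hA : IsGaussWeights r G A)
    (q : Polynomial ℝ) (hq : q.natDegree ≤ r - 1)
    (l : ℕ) (hl1 : 1 ≤ l) (hlr : l ≤ r) :
    (∑ k ∈ Finset.Icc 1 l, A k * q.eval (G k)) ^ 2 ≤
      2 * ∫ x in (-1 : ℝ)..1, (q.eval x) ^ 2 := by
  have hAnn : ∀ k ∈ Finset.Icc 1 l, 0 ≤ A k := by
    intro k hk
    obtain ⟨hk1, hkl⟩ := Finset.mem_Icc.mp hk
    exact A_nonneg r hr G A hG hA k hk1 (hkl.trans hlr)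
  -- Cauchy-Schwarz
  have hCS := Finset.sum_mul_sq_le_sq_mul_sq (Finset.Icc 1 l)
    (fun k => Real.sqrt (A k)) (fun k => Real.sqrt (A k) * q.eval (G k))
  have he1 : ∀ k ∈ Finset.Icc 1 l,
      Real.sqrt (A k) * (Real.sqrt (A k) * q.eval (G k)) = A k * q.eval (G k) := by
    intro k hk
    rw [← mul_assoc, Real.mul_self_sqrt (hAnn k hk)]
  have he2 : ∀ k ∈ Finset.Icc 1 l, Real.sqrt (A k) ^ 2 = A k := by
    intro k hk; exact Real.sq_sqrt (hAnn k hk)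
  have he3 : ∀ k ∈ Finset.Icc 1 l,
      (Real.sqrt (A k) * q.eval (G k)) ^ 2 = A k * q.eval (G k) ^ 2 := by
    intro k hk; rw [mul_pow, Real.sq_sqrt (hAnn k hk)]
  rw [Finset.sum_congr rfl he1, Finset.sum_congr rfl he2, Finset.sum_congr rfl he3] at hCS
  -- weights sum bound
  have hsub : Finset.Icc 1 l ⊆ Finset.Icc 1 r := Finset.Icc_subset_Icc le_rfl hlr
  have hsum2 : ∑ k ∈ Finset.Icc 1 r, A k = 2 := by
    have := exact_low r hr G A hG hA 1 (by simp)
    rw [show (2:ℝ) = 1 + 1 by norm_num]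
    simpa using this
  have hw : ∑ k ∈ Finset.Icc 1 l, A k ≤ 2 := by
    rw [← hsum2]
    apply Finset.sum_le_sum_of_subset_of_nonneg hsub
    intro k hk _
    obtain ⟨hk1, hkr⟩ := Finset.mem_Icc.mp hk
    exact A_nonneg r hr G A hG hA k hk1 hkr
  -- second factor bound
  have hq2 : ∑ k ∈ Finset.Icc 1 r, A k * q.eval (G k) ^ 2
      = ∫ x in (-1:ℝ)..1, (q.eval x) ^ 2 := by
    have h := exact_high r hr G A hG hA (q ^ 2) (by rw [natDegree_pow]; omega)
    calc ∑ k ∈ Finset.Icc 1 r, A k * q.eval (G k) ^ 2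
        = ∑ k ∈ Finset.Icc 1 r, A k * (q ^ 2).eval (G k) := by
          apply Finset.sum_congr rfl; intro k _; rw [eval_pow]
      _ = ∫ x in (-1:ℝ)..1, (q ^ 2).eval x := h
      _ = ∫ x in (-1:ℝ)..1, (q.eval x) ^ 2 := by
          apply intervalIntegral.integral_congr; intro x _; simp [eval_pow]
  have hv : ∑ k ∈ Finset.Icc 1 l, A k * q.eval (G k) ^ 2
      ≤ ∫ x in (-1:ℝ)..1, (q.eval x) ^ 2 := by
    rw [← hq2]
    apply Finset.sum_le_sum_of_subset_of_nonneg hsub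
    intro k hk _
    obtain ⟨hk1, hkr⟩ := Finset.mem_Icc.mp hk
    exact mul_nonneg (A_nonneg r hr G A hG hA k hk1 hkr) (sq_nonneg _)
  have hvnn : 0 ≤ ∑ k ∈ Finset.Icc 1 l, A k * q.eval (G k) ^ 2 :=
    Finset.sum_nonneg fun k hk => mul_nonneg (hAnn k hk) (sq_nonneg _)
  calc (∑ k ∈ Finset.Icc 1 l, A k * q.eval (G k)) ^ 2
      ≤ (∑ k ∈ Finset.Icc 1 l, A k) * ∑ k ∈ Finset.Icc 1 l, A k * q.eval (G k) ^ 2 := hCS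
    _ ≤ 2 * ∫ x in (-1:ℝ)..1, (q.eval x) ^ 2 := mul_le_mul hw hv hvnn (by norm_num)
end

section
/- Let H be a real Hilbert space, U ⊆ H a finite-dimensional subspace with U ≠ {0}, and V a finite-dimensional real normed space with dim V = dim U. Let b : H × V → ℝ be bilinear, and suppose there are constants M > 0 and c_0 > 0 such that |b(x, w)| ≤ M · ‖x‖ · ‖w‖ for all x ∈ H, w ∈ V, and for every v ∈ U there is w ∈ V with w ≠ 0 and b(v, w) ≥ c_0 · ‖v‖ · ‖w‖ (discrete inf-sup condition). If u ∈ H and u_h ∈ U satisfy the Petrov–Galerkin orthogonality b(u − u_h, w) = 0 for all w ∈ V, then ‖u − u_h‖ ≤ (M / c_0) · inf over v ∈ U of ‖u − v‖. -/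
/-- Abstract Petrov–Galerkin quasi-optimality (Xu–Zikatanov / Kato): if the
bilinear form `b : H × V → ℝ` is bounded by `M` and satisfies a discrete
inf-sup condition with constant `c₀` on a finite-dimensional subspace
`U ≠ {0}` of the Hilbert space `H`, with `dim V = dim U`, and `u_h ∈ U` is a
Petrov–Galerkin approximation of `u` (i.e. `b (u − u_h, ·) = 0` on `V`), then
`‖u − u_h‖ ≤ (M / c₀) · inf_{v ∈ U} ‖u − v‖`. -/
theorem petrov_galerkin_quasi_optimality
    {H : Type*} [NormedAddCommGroup H] [InnerProductSpace ℝ H] [CompleteSpace H]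
    {V : Type*} [NormedAddCommGroup V] [NormedSpace ℝ V] [FiniteDimensional ℝ V]
    (U : Submodule ℝ H) [FiniteDimensional ℝ U] (hU : U ≠ ⊥)
    (hdim : Module.finrank ℝ V = Module.finrank ℝ U)
    (b : H →ₗ[ℝ] V →ₗ[ℝ] ℝ) (M c₀ : ℝ) (hM : 0 < M) (hc₀ : 0 < c₀)
    (hbound : ∀ (x : H) (w : V), |b x w| ≤ M * ‖x‖ * ‖w‖)
    (hinfsup : ∀ v ∈ U, ∃ w : V, w ≠ 0 ∧ c₀ * ‖v‖ * ‖w‖ ≤ b v w)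
    (u uh : H) (huh : uh ∈ U)
    (horth : ∀ w : V, b (u - uh) w = 0) :
    ‖u - uh‖ ≤ (M / c₀) * ⨅ v : U, ‖u - (v : H)‖ := by
  -- First: c₀ ≤ M.
  have hcM : c₀ ≤ M := by
    obtain ⟨z, hzU, hz0⟩ := Submodule.exists_mem_ne_zero_of_ne_bot hU
    obtain ⟨w, hw0, hw⟩ := hinfsup z hzU
    have h1 : c₀ * ‖z‖ * ‖w‖ ≤ M * ‖z‖ * ‖w‖ :=
      hw.trans ((le_abs_self _).trans (hbound z w))
    have hz : 0 < ‖z‖ := norm_pos_iff.mpr hz0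
    have hwn : 0 < ‖w‖ := norm_pos_iff.mpr hw0
    nlinarith [mul_pos hz hwn]
  -- Main pointwise estimate: for each v ∈ U, c₀‖u - uh‖ ≤ M‖u - v‖.
  have key : ∀ v : U, c₀ * ‖u - uh‖ ≤ M * ‖u - (v : H)‖ := by
    rintro ⟨v, hv⟩
    set p : H := uh - v with hpdef
    set n : H := u - uh with hndef
    have hpU : p ∈ U := Submodule.sub_mem U huh hv
    have hpn : u - v = p + n := by rw [hpdef, hndef]; abel
    simp only [hpn]
    -- Galerkin orthogonality transferred through the inf-sup condition:
    have K : ∀ t : ℝ, c₀ * ‖p‖ ≤ M * ‖p + t • n‖ := by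
      intro t
      by_cases hp0 : p = 0
      · simp only [hp0, norm_zero, mul_zero]
        positivity
      obtain ⟨w, hw0, hw⟩ := hinfsup p hpU
      have hb : (b p) w = b (p + t • n) w := by
        have h0 : (b n) w = 0 := horth w
        simp [map_add, map_smul, h0]
      have h2 : c₀ * ‖p‖ * ‖w‖ ≤ M * ‖p + t • n‖ * ‖w‖ := by
        calc c₀ * ‖p‖ * ‖w‖ ≤ (b p) w := hw
          _ = b (p + t • n) w := hb
          _ ≤ M * ‖p + t • n‖ * ‖w‖ := (le_abs_self _).trans (hbound _ w)
      exact le_of_mul_le_mul_right h2 (norm_pos_iff.mpr hw0)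
    by_cases hn0 : n = 0
    · simp only [hn0, norm_zero, mul_zero, add_zero]
      positivity
    by_cases hp0 : p = 0
    · simp only [hp0, zero_add]
      exact mul_le_mul_of_nonneg_right hcM (norm_nonneg n)
    -- Now the 2D Kato argument.
    set α : ℝ := ‖p‖ ^ 2 with hα
    set ν : ℝ := ‖n‖ ^ 2 with hν
    set β : ℝ := inner ℝ p n with hβ
    have hαpos : 0 < α := pow_pos (norm_pos_iff.mpr hp0) 2
    have hνpos : 0 < ν := pow_pos (norm_pos_iff.mpr hn0) 2
    have hexp : ∀ t : ℝ, ‖p + t • n‖ ^ 2 = α + 2 * t * β + t ^ 2 * ν := by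
      intro t
      rw [@norm_add_sq_real]
      rw [real_inner_smul_right, norm_smul]
      simp [hα, hν, hβ, mul_pow, sq_abs]
      ring
    -- squared version of K:
    have Ksq : ∀ t : ℝ, c₀ ^ 2 * α ≤ M ^ 2 * (α + 2 * t * β + t ^ 2 * ν) := by
      intro t
      have h1 := K t
      have h2 : (c₀ * ‖p‖) ^ 2 ≤ (M * ‖p + t • n‖) ^ 2 := by
        have hnn : 0 ≤ c₀ * ‖p‖ := by positivity
        exact pow_le_pow_left₀ hnn h1 2
      calc c₀ ^ 2 * α = (c₀ * ‖p‖) ^ 2 := by rw [hα]; ring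
        _ ≤ (M * ‖p + t • n‖) ^ 2 := h2
        _ = M ^ 2 * (α + 2 * t * β + t ^ 2 * ν) := by rw [mul_pow, hexp t]
    -- Instantiate at the minimizer t = -β/ν.
    have hmin := Ksq (-β / ν)
    have hkey : c₀ ^ 2 * α * ν ≤ M ^ 2 * (α * ν - β ^ 2) := by
      have hne : ν ≠ 0 := ne_of_gt hνpos
      have : c₀ ^ 2 * α ≤ M ^ 2 * (α - β ^ 2 / ν) := by
        have heq : α + 2 * (-β / ν) * β + (-β / ν) ^ 2 * ν = α - β ^ 2 / ν := by
          field_simp; ring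
        rwa [heq] at hmin
      have := mul_le_mul_of_nonneg_right this (le_of_lt hνpos)
      calc c₀ ^ 2 * α * ν = c₀ ^ 2 * α * ν := rfl
        _ ≤ M ^ 2 * (α - β ^ 2 / ν) * ν := this
        _ = M ^ 2 * (α * ν - β ^ 2) := by field_simp
    -- Derive the squared goal: c₀²ν ≤ M²‖p + n‖².
    have hgsq : c₀ ^ 2 * ν ≤ M ^ 2 * ‖p + n‖ ^ 2 := by
      have hexp1 : ‖p + n‖ ^ 2 = α + 2 * β + ν := by
        have := hexp 1
        simpa using this
      rw [hexp1]
      nlinarith [sq_nonneg (α + β), mul_pos hαpos hνpos, sq_nonneg (M * (α + β)),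
        mul_le_mul_of_nonneg_left hkey (le_of_lt hαpos)]
    -- Take square roots.
    have h1 : (c₀ * ‖n‖) ^ 2 ≤ (M * ‖p + n‖) ^ 2 := by
      calc (c₀ * ‖n‖) ^ 2 = c₀ ^ 2 * ν := by rw [hν]; ring
        _ ≤ M ^ 2 * ‖p + n‖ ^ 2 := hgsq
        _ = (M * ‖p + n‖) ^ 2 := by ring
    exact (pow_le_pow_iff_left₀ (by positivity) (by positivity) two_ne_zero).mp h1
  -- Pass to the infimum.
  haveI : Nonempty U := ⟨0⟩
  have hinf : (c₀ / M) * ‖u - uh‖ ≤ ⨅ v : U, ‖u - (v : H)‖ := by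
    apply le_ciInf
    intro v
    rw [div_mul_eq_mul_div, div_le_iff₀ hM]
    calc c₀ * ‖u - uh‖ ≤ M * ‖u - (v : H)‖ := key v
      _ = ‖u - (v : H)‖ * M := mul_comm _ _
  have h2 := mul_le_mul_of_nonneg_left hinf (le_of_lt (div_pos hM hc₀))
  have h3 : (M / c₀) * ((c₀ / M) * ‖u - uh‖) = ‖u - uh‖ := by
    field_simp
  linarith [h2, h3.ge, h3.le]
end
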